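/- Let s > 1, 0 < α < n/s, and 0 < r ≤ s. Define B as the set of quasi-everywhere defined functions u for which there exists f ∈ L^s(ℝⁿ), f ≥ 0, with ‖f‖_{L^s} < 1 and I_α f ≥ |u|^{1/r} quasi-everywhere. Then B is convex: if u₁, u₂ ∈ B and λ ∈ (0,1), then λu₁ + (1-λ)u₂ ∈ B. -/

import Mathlib

open MeasureTheory ENNReal Set Filter

noncomputable section

/-- Euclidean space ℝⁿ. -/
abbrev Rn (n : ℕ) := EuclideanSpace ℝ (Fin n)

/-- The normalizing constant γ(n,α) of the Riesz potential. -/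
noncomputable def rieszConst (n : ℕ) (α : ℝ) : ℝ :=
  Real.Gamma (((n : ℝ) - α) / 2) / (Real.pi ^ ((n : ℝ) / 2) * 2 ^ α * Real.Gamma (α / 2))

/-- The Riesz potential I_α f(x) = γ(n,α) ∫ |x-y|^{α-n} f(y) dy of a nonnegative function. -/
noncomputable def rieszPotential (n : ℕ) (α : ℝ) (f : Rn n → ℝ≥0∞) (x : Rn n) : ℝ≥0∞ :=
  ENNReal.ofReal (rieszConst n α) * ∫⁻ y, ENNReal.ofReal (‖x - y‖ ^ (α - (n : ℝ))) * f y

/-- The Riesz capacity cap_{α,s}(E) = inf{‖f‖_{L^s}^s : f ≥ 0, I_α f ≥ 1 on E}. -/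
noncomputable def rieszCap (n : ℕ) (α s : ℝ) (E : Set (Rn n)) : ℝ≥0∞ :=
  ⨅ (f : Rn n → ℝ≥0∞) (_ : Measurable f ∧ ∀ x ∈ E, 1 ≤ rieszPotential n α f x),
    ∫⁻ y, f y ^ s

/-- The Choquet integral ∫ g dC = ∫₀^∞ C({g > t}) dt. -/
noncomputable def choquet {n : ℕ} (C : Set (Rn n) → ℝ≥0∞) (g : Rn n → ℝ≥0∞) : ℝ≥0∞ :=
  ∫⁻ t in Set.Ioi (0 : ℝ), C {x | ENNReal.ofReal t < g x}

/-- The gauge ‖u‖_F = inf{‖f‖_{L^s}^r : f ≥ 0, I_α f ≥ |u|^{1/r} q.e.} (inf ∅ = ⊤). -/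
noncomputable def Fgauge (n : ℕ) (α s r : ℝ) (u : Rn n → ℝ≥0∞) : ℝ≥0∞ :=
  ⨅ (f : Rn n → ℝ≥0∞)
    (_ : Measurable f ∧
      rieszCap n α s {x | rieszPotential n α f x < u x ^ (1 / r)} = 0),
    (∫⁻ y, f y ^ s) ^ (r / s)

/-- The Wolff potential W_{α,s}μ(x) = ∫₀^∞ (μ(B_t(x))/t^{n-αs})^{1/(s-1)} dt/t. -/
noncomputable def wolff (n : ℕ) (α s : ℝ) (μ : Measure (Rn n)) (x : Rn n) : ℝ≥0∞ :=
  ∫⁻ t in Set.Ioi (0 : ℝ),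
    (μ (Metric.ball x t) / ENNReal.ofReal (t ^ ((n : ℝ) - α * s))) ^ (1 / (s - 1)) /
      ENNReal.ofReal t

/-- The truncated Wolff potential W^R_{α,s}μ(x) = ∫₀^R (μ(B_t(x))/t^{n-αs})^{1/(s-1)} dt/t. -/
noncomputable def wolffT (n : ℕ) (α s R : ℝ) (μ : Measure (Rn n)) (x : Rn n) : ℝ≥0∞ :=
  ∫⁻ t in Set.Ioc (0 : ℝ) R,
    (μ (Metric.ball x t) / ENNReal.ofReal (t ^ ((n : ℝ) - α * s))) ^ (1 / (s - 1)) /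
      ENNReal.ofReal t

/-- The support of a measure: points all of whose balls have positive measure. -/
def measSupport {n : ℕ} (μ : Measure (Rn n)) : Set (Rn n) :=
  {x | ∀ r > 0, 0 < μ (Metric.ball x r)}

/-- The set B: q.e. defined functions u dominated q.e. by I_α f with ‖f‖_{L^s} < 1. -/
def inB (n : ℕ) (α s r : ℝ) (u : Rn n → ℝ≥0∞) : Prop :=
  ∃ f : Rn n → ℝ≥0∞, Measurable f ∧ (∫⁻ y, f y ^ s) < 1 ∧
    rieszCap n α s {x | rieszPotential n α f x < u x ^ (1 / r)} = 0

/- ## Auxiliary lemmas -/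

/-- Two-point Hölder inequality in `ℝ≥0∞`. -/
lemma holder2' {p q : ℝ} (hpq : p.HolderConjugate q) (x₁ x₂ y₁ y₂ : ℝ≥0∞) :
    x₁ * y₁ + x₂ * y₂ ≤ (x₁ ^ p + x₂ ^ p) ^ (1/p) * (y₁ ^ q + y₂ ^ q) ^ (1/q) := by
  have := ENNReal.inner_le_Lp_mul_Lq (s := Finset.univ) ![x₁, x₂] ![y₁, y₂] hpq
  simpa [Fin.sum_univ_succ] using this

/-- Minkowski's integral inequality, two-term version. -/
lemma minkowski2' {X : Type*} [MeasurableSpace X] (μ : Measure X) {s : ℝ} (hs : 1 < s)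
    {φ ψ : X → ℝ≥0∞} (hφ : Measurable φ) (hψ : Measurable ψ) :
    (∫⁻ x, φ x ∂μ) ^ s + (∫⁻ x, ψ x ∂μ) ^ s ≤
      (∫⁻ x, (φ x ^ s + ψ x ^ s) ^ (1/s) ∂μ) ^ s := by
  have hs0 : (0:ℝ) < s := lt_trans one_pos hs
  have hsne : s ≠ 0 := hs0.ne'
  set a := ∫⁻ x, φ x ∂μ with ha
  set b := ∫⁻ x, ψ x ∂μ with hb
  set T := ∫⁻ x, (φ x ^ s + ψ x ^ s) ^ (1/s) ∂μ with hT
  have hroot : ∀ (c : ℝ≥0∞), (c ^ s) ^ (1/s) = c := by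
    intro c
    rw [← ENNReal.rpow_mul, mul_one_div, div_self hsne, ENNReal.rpow_one]
  have haT : a ≤ T := by
    refine lintegral_mono fun x => ?_
    calc φ x = (φ x ^ s) ^ (1/s) := (hroot _).symm
    _ ≤ (φ x ^ s + ψ x ^ s) ^ (1/s) :=
      ENNReal.rpow_le_rpow (le_add_right le_rfl) (by positivity)
  have hbT : b ≤ T := by
    refine lintegral_mono fun x => ?_
    calc ψ x = (ψ x ^ s) ^ (1/s) := (hroot _).symm
    _ ≤ (φ x ^ s + ψ x ^ s) ^ (1/s) :=
      ENNReal.rpow_le_rpow (le_add_left le_rfl) (by positivity)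
  by_cases hTtop : T = ⊤
  · rw [hTtop, ENNReal.top_rpow_of_pos hs0]; exact le_top
  have haf : a ≠ ⊤ := fun h => hTtop (top_le_iff.mp (h ▸ haT))
  have hbf : b ≠ ⊤ := fun h => hTtop (top_le_iff.mp (h ▸ hbT))
  set M := a ^ s + b ^ s with hM
  by_cases hM0 : M = 0
  · exact le_of_eq_of_le hM0 zero_le
  have hMf : M ≠ ⊤ := by
    rw [hM]
    exact ENNReal.add_ne_top.mpr ⟨ENNReal.rpow_ne_top_of_nonneg hs0.le haf,
      ENNReal.rpow_ne_top_of_nonneg hs0.le hbf⟩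
  set q := Real.conjExponent s with hq
  have hpq : s.HolderConjugate q := Real.HolderConjugate.conjExponent hs
  have hsq : (s - 1) * q = s := by
    have h1 : s - 1 ≠ 0 := sub_ne_zero.mpr hs.ne'
    rw [hq, Real.conjExponent]; field_simp
  have key1 : ∀ (c : ℝ≥0∞), c ≠ ⊤ → c * c ^ (s-1) = c ^ s := by
    intro c hc
    rcases eq_or_ne c 0 with rfl | h0
    · rw [ENNReal.zero_rpow_of_pos (by linarith), ENNReal.zero_rpow_of_pos hs0, mul_zero]
    · nth_rewrite 1 [← ENNReal.rpow_one c]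
      rw [← ENNReal.rpow_add _ _ h0 hc]; ring_nf
  have hint : M = ∫⁻ x, (φ x * a ^ (s-1) + ψ x * b ^ (s-1)) ∂μ := by
    rw [lintegral_add_left (hφ.mul_const _), lintegral_mul_const _ hφ,
      lintegral_mul_const _ hψ, ← ha, ← hb, key1 a haf, key1 b hbf]
  have hpt : ∀ x, φ x * a ^ (s-1) + ψ x * b ^ (s-1) ≤
      (φ x ^ s + ψ x ^ s) ^ (1/s) * M ^ (1/q) := by
    intro x
    have h := holder2' hpq (φ x) (ψ x) (a ^ (s-1)) (b ^ (s-1))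
    rwa [← ENNReal.rpow_mul, ← ENNReal.rpow_mul, hsq] at h
  have hMT : M ≤ T * M ^ (1/q) := by
    calc M = ∫⁻ x, (φ x * a ^ (s-1) + ψ x * b ^ (s-1)) ∂μ := hint
    _ ≤ ∫⁻ x, (φ x ^ s + ψ x ^ s) ^ (1/s) * M ^ (1/q) ∂μ := lintegral_mono hpt
    _ = T * M ^ (1/q) := by
        rw [lintegral_mul_const _ (f := fun x => (φ x ^ s + ψ x ^ s) ^ (1/s)) (((hφ.pow_const s).add (hψ.pow_const s)).pow_const _)]
  have hMq : M ^ (1/q) ≠ 0 := by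
    simp [ENNReal.rpow_eq_zero_iff, hM0, hMf, hpq.symm.one_div_pos,
      hpq.symm.one_div_pos.not_gt]
  have hMqf : M ^ (1/q) ≠ ⊤ := ENNReal.rpow_ne_top_of_nonneg hpq.symm.one_div_pos.le hMf
  have hMsplit : M = M ^ (1/s) * M ^ (1/q) := by
    rw [← ENNReal.rpow_add _ _ hM0 hMf]
    have h3 : 1/s + 1/q = 1 := by
      rw [one_div, one_div, hpq.inv_add_inv_eq_one]
    rw [h3, ENNReal.rpow_one]
  have : M ^ (1/s) ≤ T := by
    have h2 : M ^ (1/s) * M ^ (1/q) ≤ T * M ^ (1/q) := by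
      rw [← hMsplit]; exact hMT
    exact (ENNReal.mul_le_mul_iff_left hMq hMqf).mp h2
  calc M = (M ^ (1/s)) ^ s := by
        rw [← ENNReal.rpow_mul, one_div, inv_mul_cancel₀ hsne, ENNReal.rpow_one]
  _ ≤ T ^ s := ENNReal.rpow_le_rpow this hs0.le

lemma rieszPot_mono' {n : ℕ} {α : ℝ} {f g : Rn n → ℝ≥0∞} (h : ∀ y, f y ≤ g y) (x : Rn n) :
    rieszPotential n α f x ≤ rieszPotential n α g x :=
  mul_le_mul_right (lintegral_mono fun y => mul_le_mul_right (h y) _) _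

lemma rieszCap_mono' {n : ℕ} {α s : ℝ} {E F : Set (Rn n)} (h : E ⊆ F) :
    rieszCap n α s E ≤ rieszCap n α s F := by
  refine le_iInf₂ fun f hf => iInf₂_le f ⟨hf.1, fun x hx => hf.2 x (h hx)⟩

lemma rieszCap_union_zero' {n : ℕ} {α s : ℝ} (hs : 1 < s) {E₁ E₂ : Set (Rn n)}
    (h₁ : rieszCap n α s E₁ = 0) (h₂ : rieszCap n α s E₂ = 0) :
    rieszCap n α s (E₁ ∪ E₂) = 0 := by
  refine le_antisymm ?_ zero_le
  refine ENNReal.le_of_forall_pos_le_add fun ε hε _ => ?_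
  rw [zero_add]
  set c : ℝ≥0∞ := (2:ℝ≥0∞) ^ (s - 1) * 2 with hc
  have hc0 : c ≠ 0 := by
    refine mul_ne_zero ?_ two_ne_zero
    simp [ENNReal.rpow_eq_zero_iff]
  have hcf : c ≠ ⊤ := by
    exact ENNReal.mul_ne_top (ENNReal.rpow_ne_top_of_nonneg (by linarith) (by simp))
      (by simp)
  set δ : ℝ≥0∞ := (ε : ℝ≥0∞) / c with hδdef
  have hδ : 0 < δ := ENNReal.div_pos (by exact_mod_cast hε.ne') hcf
  have H₁ : rieszCap n α s E₁ < δ := h₁ ▸ hδ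
  have H₂ : rieszCap n α s E₂ < δ := h₂ ▸ hδ
  rw [rieszCap] at H₁ H₂
  obtain ⟨f₁, H₁⟩ := iInf_lt_iff.mp H₁
  obtain ⟨hf₁, hint₁⟩ := iInf_lt_iff.mp H₁
  obtain ⟨f₂, H₂⟩ := iInf_lt_iff.mp H₂
  obtain ⟨hf₂, hint₂⟩ := iInf_lt_iff.mp H₂
  have hadm : Measurable (fun y => f₁ y + f₂ y) ∧
      ∀ x ∈ E₁ ∪ E₂, 1 ≤ rieszPotential n α (fun y => f₁ y + f₂ y) x := by
    refine ⟨hf₁.1.add hf₂.1, ?_⟩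
    rintro x (hx | hx)
    · exact le_trans (hf₁.2 x hx) (rieszPot_mono' (fun y => le_self_add) x)
    · exact le_trans (hf₂.2 x hx) (rieszPot_mono' (fun y => le_add_self) x)
  have hstep : rieszCap n α s (E₁ ∪ E₂) ≤ ∫⁻ y, (f₁ y + f₂ y) ^ s := by
    rw [rieszCap]; exact iInf₂_le (fun y => f₁ y + f₂ y) hadm
  calc rieszCap n α s (E₁ ∪ E₂) ≤ ∫⁻ y, (f₁ y + f₂ y) ^ s := hstep
  _ ≤ ∫⁻ y, (2:ℝ≥0∞) ^ (s - 1) * (f₁ y ^ s + f₂ y ^ s) :=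
      lintegral_mono fun y => ENNReal.rpow_add_le_mul_rpow_add_rpow _ _ hs.le
  _ = (2:ℝ≥0∞) ^ (s - 1) * ((∫⁻ y, f₁ y ^ s) + ∫⁻ y, f₂ y ^ s) := by
      rw [lintegral_const_mul _ (f := fun y => f₁ y ^ s + f₂ y ^ s) ((hf₁.1.pow_const s).add (hf₂.1.pow_const s)),
        lintegral_add_left (hf₁.1.pow_const s)]
  _ ≤ (2:ℝ≥0∞) ^ (s - 1) * (δ + δ) := mul_le_mul_right (add_le_add hint₁.le hint₂.le) _
  _ = c * δ := by rw [← two_mul, hc]; ring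
  _ = ε := ENNReal.mul_div_cancel hc0 hcf

/-- the set B is convex. -/
theorem stmt8 (n : ℕ) (α s r : ℝ) (hs : 1 < s) (hα : 0 < α) (hαn : α < n / s)
    (hr : 0 < r) (hrs : r ≤ s)
    (u₁ u₂ : Rn n → ℝ≥0∞) (hu₁ : inB n α s r u₁) (hu₂ : inB n α s r u₂)
    (l : ℝ) (hl : l ∈ Set.Ioo (0 : ℝ) 1) :
    inB n α s r (fun x => ENNReal.ofReal l * u₁ x + ENNReal.ofReal (1 - l) * u₂ x) := by
  obtain ⟨f₁, hf₁, hint₁, hcap₁⟩ := hu₁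
  obtain ⟨f₂, hf₂, hint₂, hcap₂⟩ := hu₂
  have hs0 : (0:ℝ) < s := lt_trans one_pos hs
  have hsne : s ≠ 0 := hs0.ne'
  have hroot : ∀ (c : ℝ≥0∞), (c ^ s) ^ (1/s) = c := by
    intro c
    rw [← ENNReal.rpow_mul, mul_one_div, div_self hsne, ENNReal.rpow_one]
  have hroot' : ∀ (c : ℝ≥0∞), (c ^ (1/s)) ^ s = c := by
    intro c
    rw [← ENNReal.rpow_mul, one_div, inv_mul_cancel₀ hsne, ENNReal.rpow_one]
  set wl : ℝ≥0∞ := ENNReal.ofReal l with hwl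
  set wm : ℝ≥0∞ := ENNReal.ofReal (1 - l) with hwm
  have hw : wl + wm = 1 := by
    rw [hwl, hwm, ← ENNReal.ofReal_add hl.1.le (by linarith [hl.2])]
    norm_num
  have hwl0 : wl ≠ 0 := by simp [hwl, hl.1]
  have hwlf : wl ≠ ⊤ := ENNReal.ofReal_ne_top
  have hwm0 : wm ≠ 0 := by simp [hwm]; linarith [hl.2]
  have hwmf : wm ≠ ⊤ := ENNReal.ofReal_ne_top
  set g : Rn n → ℝ≥0∞ := fun y => (wl * f₁ y ^ s + wm * f₂ y ^ s) ^ (1/s) with hg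
  have hgmeas : Measurable g :=
    ((measurable_const.mul (hf₁.pow_const s)).add
      (measurable_const.mul (hf₂.pow_const s))).pow_const _
  refine ⟨g, hgmeas, ?_, ?_⟩
  · -- integral bound
    have hgp : ∀ y, g y ^ s = wl * f₁ y ^ s + wm * f₂ y ^ s := fun y => hroot' _
    calc (∫⁻ y, g y ^ s)
        = wl * (∫⁻ y, f₁ y ^ s) + wm * (∫⁻ y, f₂ y ^ s) := by
          simp_rw [hgp]
          rw [lintegral_add_left (f := fun y => wl * f₁ y ^ s) (measurable_const.mul (hf₁.pow_const s)),
            lintegral_const_mul _ (hf₁.pow_const s), lintegral_const_mul _ (hf₂.pow_const s)]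
    _ < wl * 1 + wm * 1 :=
        ENNReal.add_lt_add ((ENNReal.mul_lt_mul_iff_right hwl0 hwlf).mpr hint₁)
          ((ENNReal.mul_lt_mul_iff_right hwm0 hwmf).mpr hint₂)
    _ = 1 := by rw [mul_one, mul_one, hw]
  · -- capacity of bad set is zero
    set E₁ := {x | rieszPotential n α f₁ x < u₁ x ^ (1/r)} with hE₁
    set E₂ := {x | rieszPotential n α f₂ x < u₂ x ^ (1/r)} with hE₂
    show rieszCap n α s {x | rieszPotential n α g x < (wl * u₁ x + wm * u₂ x) ^ (1/r)} = 0
    have hsub : {x | rieszPotential n α g x <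
        (wl * u₁ x + wm * u₂ x) ^ (1/r)} ⊆ E₁ ∪ E₂ := by
      intro x hx
      by_contra hcon
      simp only [mem_union, not_or, hE₁, hE₂, mem_setOf_eq, not_lt] at hcon
      obtain ⟨h1, h2⟩ := hcon
      simp only [mem_setOf_eq] at hx
      refine absurd hx (not_lt.mpr ?_)
      -- key inequality
      set k : Rn n → ℝ≥0∞ := fun y => ENNReal.ofReal (‖x - y‖ ^ (α - (n:ℝ))) with hk
      have hkm : Measurable k :=
        ENNReal.measurable_ofReal.comp
          (((measurable_const.sub measurable_id).norm).pow_const _)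
      set φ : Rn n → ℝ≥0∞ := fun y => wl ^ (1/s) * (k y * f₁ y) with hφ
      set ψ : Rn n → ℝ≥0∞ := fun y => wm ^ (1/s) * (k y * f₂ y) with hψ
      have hφm : Measurable φ := measurable_const.mul (hkm.mul hf₁)
      have hψm : Measurable ψ := measurable_const.mul (hkm.mul hf₂)
      have hptwise : ∀ y, (φ y ^ s + ψ y ^ s) ^ (1/s) = k y * g y := by
        intro y
        have e1 : φ y ^ s = wl * (k y ^ s * f₁ y ^ s) := by
          rw [hφ, ENNReal.mul_rpow_of_nonneg _ _ hs0.le,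
            ENNReal.mul_rpow_of_nonneg _ _ hs0.le, hroot' wl]
        have e2 : ψ y ^ s = wm * (k y ^ s * f₂ y ^ s) := by
          rw [hψ, ENNReal.mul_rpow_of_nonneg _ _ hs0.le,
            ENNReal.mul_rpow_of_nonneg _ _ hs0.le, hroot' wm]
        rw [e1, e2]
        have e3 : wl * (k y ^ s * f₁ y ^ s) + wm * (k y ^ s * f₂ y ^ s)
            = k y ^ s * (wl * f₁ y ^ s + wm * f₂ y ^ s) := by ring
        rw [e3, ENNReal.mul_rpow_of_nonneg _ _ (by positivity), hroot (k y)]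
      have hmink := minkowski2' volume hs hφm hψm
      simp_rw [hptwise] at hmink
      have hφint : ∫⁻ y, φ y = wl ^ (1/s) * ∫⁻ y, k y * f₁ y :=
        lintegral_const_mul _ (hkm.mul hf₁)
      have hψint : ∫⁻ y, ψ y = wm ^ (1/s) * ∫⁻ y, k y * f₂ y :=
        lintegral_const_mul _ (hkm.mul hf₂)
      rw [hφint, hψint, ENNReal.mul_rpow_of_nonneg _ _ hs0.le,
        ENNReal.mul_rpow_of_nonneg _ _ hs0.le, hroot' wl, hroot' wm] at hmink
      -- hmink : wl * A₁^s + wm * A₂^s ≤ (∫ k g)^s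
      set C : ℝ≥0∞ := ENNReal.ofReal (rieszConst n α) with hC
      have hip : ∀ (f : Rn n → ℝ≥0∞), rieszPotential n α f x = C * ∫⁻ y, k y * f y :=
        fun f => rfl
      have hmul : wl * rieszPotential n α f₁ x ^ s + wm * rieszPotential n α f₂ x ^ s
          ≤ rieszPotential n α g x ^ s := by
        rw [hip f₁, hip f₂, hip g, ENNReal.mul_rpow_of_nonneg _ _ hs0.le,
          ENNReal.mul_rpow_of_nonneg _ _ hs0.le, ENNReal.mul_rpow_of_nonneg _ _ hs0.le]
        refine le_trans (le_of_eq (by ring)) (mul_le_mul_right hmink (C ^ s))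
      have hu : wl * (u₁ x ^ (1/r)) ^ s + wm * (u₂ x ^ (1/r)) ^ s
          ≤ rieszPotential n α g x ^ s :=
        le_trans (add_le_add (mul_le_mul_right (ENNReal.rpow_le_rpow h1 hs0.le) _)
          (mul_le_mul_right (ENNReal.rpow_le_rpow h2 hs0.le) _)) hmul
      have hconv : (wl * u₁ x + wm * u₂ x) ^ (s/r)
          ≤ wl * u₁ x ^ (s/r) + wm * u₂ x ^ (s/r) :=
        ENNReal.rpow_arith_mean_le_arith_mean2_rpow wl wm (u₁ x) (u₂ x) hw
          ((one_le_div hr).mpr hrs)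
      have hsr : ∀ (c : ℝ≥0∞), c ^ (s/r) = (c ^ (1/r)) ^ s := by
        intro c
        rw [← ENNReal.rpow_mul]
        congr 1
        field_simp
      have hkey : (wl * u₁ x + wm * u₂ x) ^ (s/r) ≤ rieszPotential n α g x ^ s := by
        refine le_trans hconv (le_trans ?_ hu)
        rw [hsr (u₁ x), hsr (u₂ x)]
      have := ENNReal.rpow_le_rpow hkey (by positivity : (0:ℝ) ≤ 1/s)
      rw [hroot] at this
      rw [← ENNReal.rpow_mul] at this
      have hexp : s/r * (1/s) = 1/r := by field_simp
      rw [hexp] at this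
      exact this
    refine le_antisymm ?_ zero_le
    calc rieszCap n α s _ ≤ rieszCap n α s (E₁ ∪ E₂) := rieszCap_mono' hsub
    _ = 0 := rieszCap_union_zero' hs hcap₁ hcap₂
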